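/- arXiv:1704.08553 — 5 statements merged into one kernel-verified Lean document; each statement's English description precedes it below -/
import Mathlib

section
/- For every x > -1 and every λ ∈ (0,1), the inequality (1-λ)·((1+x)·log(1+x) - x) ≥ 1 + λ·x - (1+x)^λ holds. -/
theorem lepingle_memin_ineq (x : ℝ) (hx : x > -1) (l : ℝ) (hl : l ∈ Set.Ioo (0 : ℝ) 1) :
    (1 - l) * ((1 + x) * Real.log (1 + x) - x) ≥ 1 + l * x - (1 + x) ^ l := by
  obtain ⟨hl0, hl1⟩ := hl
  have hy : (0:ℝ) < 1 + x := by linarith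
  set L := Real.log (1 + x) with hL
  have hr : (1 + x) ^ l = Real.exp (L * l) := Real.rpow_def_of_pos hy l
  have hsplit : Real.exp (L * l) = (1 + x) * Real.exp ((l - 1) * L) := by
    rw [← Real.exp_log hy, ← Real.exp_add]
    ring_nf
    rw [← hL]; congr 1; ring
  have hexp : (l - 1) * L + 1 ≤ Real.exp ((l - 1) * L) := Real.add_one_le_exp _
  have : (1 + x) * ((l - 1) * L + 1) ≤ (1 + x) * Real.exp ((l - 1) * L) := by
    exact mul_le_mul_of_nonneg_left hexp hy.le
  rw [hr, hsplit]
  nlinarith [this]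
end

section
/- Let F be a finite nonnegative measure on ℝ, let g : ℝ → [0,∞) be measurable with ∫ g dF < ∞ and ∫ g·log(1+g) dF < ∞, and define h(y) = ∫ ((1+y·g(x))·log(1+y·g(x)) - y·g(x)) F(dx) for y ≥ 0. Then there exist constants γ₁, γ₂ ∈ (0,∞) such that h(y) ≤ γ₁·y·log(1+y) + γ₂ for all y ≥ 0. -/
open MeasureTheory Real

theorem h_bound (F : Measure ℝ) [IsFiniteMeasure F]
    (g : ℝ → ℝ) (hg_meas : Measurable g) (hg_nonneg : ∀ x, 0 ≤ g x)
    (hg_int : Integrable g F)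
    (hg_log_int : Integrable (fun x => g x * Real.log (1 + g x)) F) :
    ∃ γ₁ γ₂ : ℝ, 0 < γ₁ ∧ 0 < γ₂ ∧ ∀ y : ℝ, 0 ≤ y →
      ∫ x, ((1 + y * g x) * Real.log (1 + y * g x) - y * g x) ∂F
        ≤ γ₁ * y * Real.log (1 + y) + γ₂ := by
  set A := ∫ x, g x ∂F with hA
  set B := ∫ x, g x * Real.log (1 + g x) ∂F with hB
  have hA0 : 0 ≤ A := integral_nonneg fun x => hg_nonneg x
  have hB0 : 0 ≤ B := integral_nonneg fun x =>
    mul_nonneg (hg_nonneg x) (Real.log_nonneg (by linarith [hg_nonneg x]))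
  refine ⟨A + B + 1, 2 * B + 1, by linarith, by linarith, fun y hy => ?_⟩
  have hL : 0 ≤ Real.log (1 + y) := Real.log_nonneg (by linarith)
  have key : ∫ x, ((1 + y * g x) * Real.log (1 + y * g x) - y * g x) ∂F
      ≤ ∫ x, (Real.log (1 + y) * y * g x + y * (g x * Real.log (1 + g x))) ∂F := by
    apply integral_mono_of_nonneg
    · filter_upwards with x
      have hg := hg_nonneg x
      have ht : 0 ≤ y * g x := mul_nonneg hy hg
      have h1 : (0:ℝ) < 1 + y * g x := by linarith
      -- log x ≥ 1 - 1/x, from log(1/x) ≤ 1/x - 1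
      have hinv := Real.log_le_sub_one_of_pos (show (0:ℝ) < (1 + y * g x)⁻¹ by positivity)
      rw [Real.log_inv] at hinv
      have hfield : (1 + y * g x)⁻¹ * (1 + y * g x) = 1 := by field_simp
      simp only [Pi.zero_apply]
      nlinarith [mul_le_mul_of_nonneg_right hinv (le_of_lt h1)]
    · exact ((hg_int.const_mul (Real.log (1 + y) * y)).add (hg_log_int.const_mul y))
    · filter_upwards with x
      have hg := hg_nonneg x
      have ht : 0 ≤ y * g x := mul_nonneg hy hg
      have h1 : (0:ℝ) < 1 + y * g x := by linarith
      have hlog1 : Real.log (1 + y * g x) ≤ y * g x := by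
        have := Real.log_le_sub_one_of_pos h1; linarith
      have hstep : (1 + y * g x) * Real.log (1 + y * g x) - y * g x
          ≤ y * g x * Real.log (1 + y * g x) := by nlinarith
      have hsplit : Real.log (1 + y * g x) ≤ Real.log (1 + y) + Real.log (1 + g x) := by
        rw [← Real.log_mul (by linarith) (by linarith)]
        apply Real.log_le_log h1
        nlinarith
      calc (1 + y * g x) * Real.log (1 + y * g x) - y * g x
          ≤ y * g x * Real.log (1 + y * g x) := hstep
        _ ≤ y * g x * (Real.log (1 + y) + Real.log (1 + g x)) := by
            apply mul_le_mul_of_nonneg_left hsplit ht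
        _ = Real.log (1 + y) * y * g x + y * (g x * Real.log (1 + g x)) := by ring
  have hint : ∫ x, (Real.log (1 + y) * y * g x + y * (g x * Real.log (1 + g x))) ∂F
      = Real.log (1 + y) * y * A + y * B := by
    rw [integral_add (hg_int.const_mul _) (hg_log_int.const_mul _),
      integral_const_mul, integral_const_mul]
  rw [hint] at key
  have hy2 : y ≤ y * Real.log (1 + y) + 2 := by
    rcases le_or_gt y 2 with h | h
    · nlinarith [mul_nonneg hy hL]
    · have h3 : (1:ℝ) ≤ Real.log (1 + y) := by
        rw [Real.le_log_iff_exp_le (by linarith)]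
        calc Real.exp 1 ≤ 3 := le_of_lt (Real.exp_one_lt_d9.trans_le (by norm_num))
          _ ≤ 1 + y := by linarith
      nlinarith
  have hfin : Real.log (1 + y) * y * A + y * B
      ≤ (A + B + 1) * y * Real.log (1 + y) + (2 * B + 1) := by
    nlinarith [mul_nonneg hB0 (by linarith : 0 ≤ y * Real.log (1 + y) + 2 - y),
      mul_nonneg hy hL]
  linarith
end

section
/- Let f(x) = (1+x)·log(1+x) - x on (-1,∞). If g : (-1,∞) → [0,∞) is any function satisfying (1-λ)·g(x) ≥ 1 + λ·x - (1+x)^λ for all x > -1 and all λ ∈ (0,1), then g(x) ≥ f(x) for all x > -1. -/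
theorem f_minimal (g : ℝ → ℝ)
    (hg : ∀ x : ℝ, x > -1 → ∀ l ∈ Set.Ioo (0 : ℝ) 1,
      (1 - l) * g x ≥ 1 + l * x - (1 + x) ^ l) :
    ∀ x : ℝ, x > -1 → g x ≥ (1 + x) * Real.log (1 + x) - x := by
  intro x hx
  have hx1 : (0:ℝ) < 1 + x := by linarith
  set φ : ℝ → ℝ := fun l => 1 + l * x - (1 + x) ^ l with hφ
  have hφ1 : φ 1 = 0 := by simp [hφ, Real.rpow_one]
  have hderiv : HasDerivAt φ (x - (1 + x) ^ (1:ℝ) * Real.log (1 + x)) 1 := by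
    have h1 : HasDerivAt (fun l : ℝ => 1 + l * x) x 1 := by
      simpa using ((hasDerivAt_id (1:ℝ)).mul_const x).const_add 1
    have h2 : HasDerivAt (fun l : ℝ => (1 + x) ^ l)
        ((1 + x) ^ (1:ℝ) * Real.log (1 + x)) 1 :=
      (Real.hasStrictDerivAt_const_rpow hx1 1).hasDerivAt
    exact h1.sub h2
  have hslope : Filter.Tendsto (fun l => φ l / (l - 1)) (nhdsWithin 1 {(1:ℝ)}ᶜ)
      (nhds (x - (1 + x) ^ (1:ℝ) * Real.log (1 + x))) := by
    have := hasDerivAt_iff_tendsto_slope.mp hderiv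
    refine this.congr' ?_
    filter_upwards [self_mem_nhdsWithin] with l hl
    simp [slope, hφ1, div_eq_inv_mul]
  have hneg : Filter.Tendsto (fun l => φ l / (1 - l)) (nhdsWithin 1 (Set.Iio 1))
      (nhds ((1 + x) * Real.log (1 + x) - x)) := by
    have h := (hslope.mono_left (nhdsWithin_mono 1 (by
      intro y hy; exact fun h => (Set.mem_Iio.mp hy).ne h))).neg
    have : ((1 + x) * Real.log (1 + x) - x)
        = -(x - (1 + x) ^ (1:ℝ) * Real.log (1 + x)) := by
      rw [Real.rpow_one]; ring
    rw [this]
    refine h.congr fun l => ?_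
    show -(φ l / (l - 1)) = φ l / (1 - l)
    rw [show (1:ℝ) - l = -(l - 1) by ring, div_neg]
  refine le_of_tendsto hneg ?_
  filter_upwards [Ioo_mem_nhdsLT_of_mem (Set.mem_Ioc.mpr ⟨(by norm_num : (0:ℝ) < 1), le_refl 1⟩)] with l hl
  have h1l : 0 < 1 - l := by linarith [hl.2]
  have := hg x hx l hl
  rw [div_le_iff₀ h1l]
  calc φ l ≤ (1 - l) * g x := this
    _ = g x * (1 - l) := by ring
end

section
/- Let X be an integrable real random variable, ζ ∈ ℝ with P(X < ζ) > 0 and P(X > ζ) > 0, and let λ(ζ) = (ζ - E[X | X < ζ])/(E[X | X ≥ ζ] - E[X | X < ζ]). Define the measure ϖ_ζ(B) = (1-λ(ζ))·P(X ∈ B | X < ζ) + λ(ζ)·P(X ∈ B | X ≥ ζ) for Borel sets B. Then ϖ_ζ is a probability measure with mean ∫ x ϖ_ζ(dx) = ζ. -/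
open MeasureTheory ProbabilityTheory Function

theorem tilted_two_point_measure {Ω : Type*} [MeasurableSpace Ω] (μ : Measure Ω)
    [IsProbabilityMeasure μ] (X : Ω → ℝ) (hX_meas : Measurable X)
    (hX : Integrable X μ) (ζ : ℝ)
    (h₁ : 0 < μ {ω | X ω < ζ}) (h₂ : 0 < μ {ω | ζ < X ω}) :
    let mMinus : ℝ := (∫ ω in {ω | X ω < ζ}, X ω ∂μ) / (μ {ω | X ω < ζ}).toReal
    let mPlus : ℝ := (∫ ω in {ω | ζ ≤ X ω}, X ω ∂μ) / (μ {ω | ζ ≤ X ω}).toReal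
    let lam : ℝ := (ζ - mMinus) / (mPlus - mMinus)
    let ϖ : Measure ℝ :=
      ENNReal.ofReal (1 - lam) • Measure.map X (μ[|{ω | X ω < ζ}]) +
        ENNReal.ofReal lam • Measure.map X (μ[|{ω | ζ ≤ X ω}])
    IsProbabilityMeasure ϖ ∧ ∫ x, x ∂ϖ = ζ := by
  intro mMinus mPlus lam ϖ
  set A : Set Ω := {ω | X ω < ζ} with hA
  set B : Set Ω := {ω | ζ ≤ X ω} with hB
  have hAm : MeasurableSet A := measurableSet_lt hX_meas measurable_const
  have hBm : MeasurableSet B := measurableSet_le measurable_const hX_meas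
  have hμA : μ A ≠ 0 := h₁.ne'
  have hμA' : μ A ≠ ⊤ := measure_ne_top μ A
  have hμBpos : 0 < μ B := by
    refine lt_of_lt_of_le h₂ (measure_mono ?_)
    rw [hB]
    exact fun ω hω => show ζ ≤ X ω from le_of_lt hω
  have hμB : μ B ≠ 0 := hμBpos.ne'
  have hμB' : μ B ≠ ⊤ := measure_ne_top μ B
  have hApos : 0 < (μ A).toReal := ENNReal.toReal_pos hμA hμA'
  have hBpos : 0 < (μ B).toReal := ENNReal.toReal_pos hμB hμB'
  have hXA : IntegrableOn X A μ := hX.integrableOn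
  have hXB : IntegrableOn X B μ := hX.integrableOn
  -- mMinus < ζ
  have hsub : 0 < ∫ ω in A, (ζ - X ω) ∂μ := by
    rw [setIntegral_pos_iff_support_of_nonneg_ae ?_ ?_]
    · refine lt_of_lt_of_le h₁ (measure_mono ?_)
      intro ω hω
      exact ⟨sub_ne_zero.mpr (ne_of_gt (show X ω < ζ from hω)), hω⟩
    · filter_upwards [ae_restrict_mem hAm] with ω hω
      exact sub_nonneg.mpr (le_of_lt hω)
    · exact (integrableOn_const hμA').sub hXA
  have hintA : ∫ ω in A, X ω ∂μ < ζ * (μ A).toReal := by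
    have := hsub
    rw [integral_sub (integrableOn_const (C := ζ) hμA') hXA,
      setIntegral_const] at this
    simp only [smul_eq_mul, Measure.real] at this
    linarith [this]
  have hmm : mMinus < ζ := by
    rw [show mMinus = (∫ ω in A, X ω ∂μ) / (μ A).toReal from rfl, div_lt_iff₀ hApos]
    linarith
  -- ζ ≤ mPlus
  have hmp : ζ ≤ mPlus := by
    rw [show mPlus = (∫ ω in B, X ω ∂μ) / (μ B).toReal from rfl, le_div_iff₀ hBpos]
    exact setIntegral_ge_of_const_le_real hBm hμB' (fun ω hω => hω) hXB
  have hden : 0 < mPlus - mMinus := by linarith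
  have hlam0 : 0 < lam := div_pos (by linarith) hden
  have hlam1 : lam ≤ 1 := by
    rw [show lam = (ζ - mMinus) / (mPlus - mMinus) from rfl, div_le_one hden]
    linarith
  haveI hPA : IsProbabilityMeasure (μ[|A]) := cond_isProbabilityMeasure hμA
  haveI hPB : IsProbabilityMeasure (μ[|B]) := cond_isProbabilityMeasure hμB
  haveI hMA : IsProbabilityMeasure (Measure.map X (μ[|A])) :=
    Measure.isProbabilityMeasure_map hX_meas.aemeasurable
  haveI hMB : IsProbabilityMeasure (Measure.map X (μ[|B])) :=
    Measure.isProbabilityMeasure_map hX_meas.aemeasurable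
  have hprob : IsProbabilityMeasure ϖ := by
    constructor
    simp only [show ϖ = ENNReal.ofReal (1 - lam) • Measure.map X (μ[|A]) +
        ENNReal.ofReal lam • Measure.map X (μ[|B]) from rfl,
      Measure.add_apply, Measure.smul_apply, measure_univ, smul_eq_mul, mul_one]
    rw [← ENNReal.ofReal_add (by linarith) hlam0.le]
    norm_num
  -- integrals of the conditional map measures
  have hcondI : ∀ (S : Set Ω), μ S ≠ 0 → IntegrableOn X S μ →
      Integrable X (μ[|S]) := by
    intro S hS hXS
    rw [ProbabilityTheory.cond]
    exact hXS.smul_measure (ENNReal.inv_ne_top.mpr hS)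
  have hIA : Integrable X (μ[|A]) := hcondI A hμA hXA
  have hIB : Integrable X (μ[|B]) := hcondI B hμB hXB
  have hmapIA : Integrable (fun x : ℝ => x) (Measure.map X (μ[|A])) :=
    (integrable_map_measure aestronglyMeasurable_id hX_meas.aemeasurable).mpr hIA
  have hmapIB : Integrable (fun x : ℝ => x) (Measure.map X (μ[|B])) :=
    (integrable_map_measure aestronglyMeasurable_id hX_meas.aemeasurable).mpr hIB
  have hintcond : ∀ (S : Set Ω), μ S ≠ 0 → μ S ≠ ⊤ →
      ∫ x, x ∂(Measure.map X (μ[|S])) = (∫ ω in S, X ω ∂μ) / (μ S).toReal := by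
    intro S hS hS'
    rw [integral_map hX_meas.aemeasurable (by exact aestronglyMeasurable_id)]
    rw [ProbabilityTheory.cond, integral_smul_measure]
    rw [ENNReal.toReal_inv]
    simp [div_eq_inv_mul]
  have hIntA : ∫ x, x ∂(Measure.map X (μ[|A])) = mMinus := hintcond A hμA hμA'
  have hIntB : ∫ x, x ∂(Measure.map X (μ[|B])) = mPlus := hintcond B hμB hμB'
  refine ⟨hprob, ?_⟩
  have hϖ : ϖ = ENNReal.ofReal (1 - lam) • Measure.map X (μ[|A]) +
      ENNReal.ofReal lam • Measure.map X (μ[|B]) := rfl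
  rw [hϖ, integral_add_measure (hmapIA.smul_measure ENNReal.ofReal_ne_top)
      (hmapIB.smul_measure ENNReal.ofReal_ne_top),
    integral_smul_measure, integral_smul_measure, hIntA, hIntB,
    ENNReal.toReal_ofReal (by linarith), ENNReal.toReal_ofReal hlam0.le]
  have hcancel : lam * (mPlus - mMinus) = ζ - mMinus :=
    div_mul_cancel₀ _ hden.ne'
  simp only [smul_eq_mul]
  nlinarith [hcancel]
end

section
/- Let F be a finite measure on ℝ with F({0}) = 0, supported in [-a, a]^c for some a > 0 (i.e., F = F(· ∩ [-a,a]^c)), with F(ℝ) > 0 and ∫ |x| dF < ∞, and suppose F((-∞,ζ)) > 0 and F((ζ,∞)) > 0 for a given ζ ∈ ℝ. Then there exists a measurable strictly positive function α : ℝ → (0, ∞) with α(x) = 1 for |x| ≤ a such that ∫_{[-a,a]^c} α(x) F(dx) = F(ℝ) and ∫_{[-a,a]^c} x·α(x) F(dx) = ζ·F(ℝ). -/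
open MeasureTheory

theorem tilting_density_exists (F : Measure ℝ) [IsFiniteMeasure F]
    (a : ℝ) (ha : 0 < a) (hsupp : F (Set.Icc (-a) a) = 0)
    (hpos : 0 < F Set.univ)
    (hmom : Integrable (fun x : ℝ => |x|) F) (ζ : ℝ)
    (h₁ : 0 < F (Set.Iio ζ)) (h₂ : 0 < F (Set.Ioi ζ)) :
    ∃ α : ℝ → ℝ, Measurable α ∧ (∀ x, 0 < α x) ∧
      (∀ x : ℝ, |x| ≤ a → α x = 1) ∧
      (∫ x in {x : ℝ | a < |x|}, α x ∂F) = (F Set.univ).toReal ∧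
      (∫ x in {x : ℝ | a < |x|}, x * α x ∂F) = ζ * (F Set.univ).toReal := by
  have hx_int : Integrable (fun x : ℝ => x) F := by
    refine hmom.mono' measurable_id.aestronglyMeasurable ?_
    filter_upwards with x
    simp [Real.norm_eq_abs]
  set μ₁ : ℝ := (F (Set.Iio ζ)).toReal with hμ₁def
  set μ₂ : ℝ := (F (Set.Ici ζ)).toReal with hμ₂def
  set I₁ : ℝ := ∫ x in Set.Iio ζ, x ∂F with hI₁def
  set I₂ : ℝ := ∫ x in Set.Ici ζ, x ∂F with hI₂def
  have hμ₁pos : 0 < μ₁ := ENNReal.toReal_pos h₁.ne' (measure_ne_top F _)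
  have hμ₂nonneg : 0 ≤ μ₂ := ENNReal.toReal_nonneg
  -- S₋ = ζ μ₁ - I₁ > 0
  have hSm : 0 < ζ * μ₁ - I₁ := by
    have h0 : (0 : ℝ) < ∫ x in Set.Iio ζ, (ζ - x) ∂F := by
      rw [setIntegral_pos_iff_support_of_nonneg_ae]
      · refine lt_of_lt_of_le h₁ (measure_mono ?_)
        intro x hx
        exact ⟨Function.mem_support.2 (sub_ne_zero.2 (Set.mem_Iio.1 hx).ne'), hx⟩
      · filter_upwards [ae_restrict_mem measurableSet_Iio] with x hx
        simp [le_of_lt (Set.mem_Iio.1 hx)]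
      · exact ((integrable_const ζ).sub hx_int).integrableOn
    have heq : ∫ x in Set.Iio ζ, (ζ - x) ∂F = ζ * μ₁ - I₁ := by
      rw [integral_sub (integrable_const ζ) hx_int.restrict, setIntegral_const,
        smul_eq_mul, hμ₁def, mul_comm]
      rfl
    linarith [heq ▸ h0]
  -- S₊ = I₂ - ζ μ₂ > 0
  have hSp : 0 < I₂ - ζ * μ₂ := by
    have h0 : (0 : ℝ) < ∫ x in Set.Ici ζ, (x - ζ) ∂F := by
      rw [setIntegral_pos_iff_support_of_nonneg_ae]
      · refine lt_of_lt_of_le h₂ (measure_mono ?_)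
        intro x hx
        exact ⟨Function.mem_support.2 (sub_ne_zero.2 (Set.mem_Ioi.1 hx).ne'), le_of_lt (Set.mem_Ioi.1 hx)⟩
      · filter_upwards [ae_restrict_mem measurableSet_Ici] with x hx
        simp [Set.mem_Ici.1 hx]
      · exact (hx_int.sub (integrable_const ζ)).integrableOn
    have heq : ∫ x in Set.Ici ζ, (x - ζ) ∂F = I₂ - ζ * μ₂ := by
      rw [integral_sub hx_int.restrict (integrable_const ζ), setIntegral_const,
        smul_eq_mul, hμ₂def, mul_comm]
      rfl
    linarith [heq ▸ h0]
  set Sm : ℝ := ζ * μ₁ - I₁ with hSmdef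
  set Sp : ℝ := I₂ - ζ * μ₂ with hSpdef
  set D : ℝ := Sp * μ₁ + Sm * μ₂ with hDdef
  have hD : 0 < D := by
    have h1 : 0 < Sp * μ₁ := mul_pos hSp hμ₁pos
    have h2 : 0 ≤ Sm * μ₂ := mul_nonneg hSm.le hμ₂nonneg
    linarith
  set m : ℝ := (F Set.univ).toReal with hmdef
  have hmpos : 0 < m := ENNReal.toReal_pos hpos.ne' (measure_ne_top F _)
  have hm : m = μ₁ + μ₂ := by
    rw [hmdef, hμ₁def, hμ₂def, ← ENNReal.toReal_add (measure_ne_top F _) (measure_ne_top F _),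
      ← measure_union (Set.Iio_disjoint_Ici le_rfl) measurableSet_Ici, Set.Iio_union_Ici]
  set t : ℝ := m / D with htdef
  have ht : 0 < t := div_pos hmpos hD
  set p : ℝ := t * Sp with hpdef
  set q : ℝ := t * Sm with hqdef
  have hp : 0 < p := mul_pos ht hSp
  have hq : 0 < q := mul_pos ht hSm
  set β : ℝ → ℝ := fun x => if x < ζ then p else q with hβdef
  have hβmeas : Measurable β := Measurable.ite measurableSet_Iio measurable_const measurable_const
  have hβint : Integrable β F := by
    refine (integrable_const (max p q)).mono' hβmeas.aestronglyMeasurable ?_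
    filter_upwards with x
    rw [hβdef]
    by_cases h : x < ζ <;> simp [h, Real.norm_eq_abs, abs_of_pos hp, abs_of_pos hq,
      le_max_left, le_max_right]
  have hxβint : Integrable (fun x => x * β x) F := by
    refine (hmom.const_mul (max p q)).mono'
      (measurable_id.mul hβmeas).aestronglyMeasurable ?_
    filter_upwards with x
    rw [hβdef, Real.norm_eq_abs, abs_mul]
    by_cases h : x < ζ <;>
      simp only [h, if_true, if_false] <;>
      [skip; skip] <;>
      rw [mul_comm (max p q) |x|] <;>
      gcongr <;>
      simp [abs_of_pos hp, abs_of_pos hq, le_max_left, le_max_right]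
  -- the set {a < |x|}
  set s : Set ℝ := {x : ℝ | a < |x|} with hsdef
  have hsc : sᶜ = Set.Icc (-a) a := by
    ext x
    simp [hsdef, abs_le, not_lt]
  have hs : MeasurableSet s := by
    have : s = {x : ℝ | |x| ≤ a}ᶜ := by
      ext x; simp [hsdef, not_le]
    rw [this]
    exact (measurableSet_le measurable_abs measurable_const).compl
  have hres : F.restrict s = F := by
    refine Measure.restrict_eq_self_of_ae_mem ?_
    rw [ae_iff]
    have : {x : ℝ | ¬ x ∈ s} = Set.Icc (-a) a := by
      rw [← hsc]; rfl
    rw [this]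
    exact hsupp
  -- α
  refine ⟨fun x => if |x| ≤ a then 1 else β x, ?_, ?_, ?_, ?_, ?_⟩
  · exact Measurable.ite (measurableSet_le measurable_abs measurable_const)
      measurable_const hβmeas
  · intro x
    by_cases h : |x| ≤ a
    · simp [h]
    · simp only [h, if_false]
      rw [hβdef]
      by_cases h' : x < ζ <;> simp [h', hp, hq]
  · intro x hx; simp [hx]
  · have hcong : ∫ x in s, (if |x| ≤ a then 1 else β x) ∂F = ∫ x in s, β x ∂F := by
      refine setIntegral_congr_fun hs fun x hx => ?_
      simp [hsdef] at hx
      simp [not_le.2 hx]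
    rw [hcong, show (∫ x in s, β x ∂F) = ∫ x, β x ∂F by rw [hres],
      ← integral_add_compl measurableSet_Iio hβint, Set.compl_Iio]
    have e1 : ∫ x in Set.Iio ζ, β x ∂F = μ₁ * p := by
      rw [show (∫ x in Set.Iio ζ, β x ∂F) = ∫ _ in Set.Iio ζ, p ∂F from
        setIntegral_congr_fun measurableSet_Iio fun x hx => if_pos hx,
        setIntegral_const, smul_eq_mul]
      rfl
    have e2 : ∫ x in Set.Ici ζ, β x ∂F = μ₂ * q := by
      rw [show (∫ x in Set.Ici ζ, β x ∂F) = ∫ _ in Set.Ici ζ, q ∂F from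
        setIntegral_congr_fun measurableSet_Ici fun x hx => if_neg (not_lt.2 hx),
        setIntegral_const, smul_eq_mul]
      rfl
    rw [e1, e2]
    have h' : μ₁ * p + μ₂ * q = t * D := by
      simp only [hpdef, hqdef, hDdef]; ring
    rw [h', htdef, div_mul_cancel₀ _ hD.ne']
  · have hcong : ∫ x in s, x * (if |x| ≤ a then 1 else β x) ∂F
        = ∫ x in s, x * β x ∂F := by
      refine setIntegral_congr_fun hs fun x hx => ?_
      simp [hsdef] at hx
      simp [not_le.2 hx]
    rw [hcong, show (∫ x in s, x * β x ∂F) = ∫ x, x * β x ∂F by rw [hres],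
      ← integral_add_compl measurableSet_Iio hxβint, Set.compl_Iio]
    have e1 : ∫ x in Set.Iio ζ, x * β x ∂F = I₁ * p := by
      rw [show (∫ x in Set.Iio ζ, x * β x ∂F) = ∫ x in Set.Iio ζ, x * p ∂F from
        setIntegral_congr_fun measurableSet_Iio fun x hx => by
          simp only [hβdef]; rw [if_pos (Set.mem_Iio.1 hx)],
        integral_mul_const]
    have e2 : ∫ x in Set.Ici ζ, x * β x ∂F = I₂ * q := by
      rw [show (∫ x in Set.Ici ζ, x * β x ∂F) = ∫ x in Set.Ici ζ, x * q ∂F from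
        setIntegral_congr_fun measurableSet_Ici fun x hx => by
          simp only [hβdef]; rw [if_neg (not_lt.2 (Set.mem_Ici.1 hx))],
        integral_mul_const]
    rw [e1, e2]
    have key : I₁ * p + I₂ * q = ζ * (t * D) := by
      simp only [hpdef, hqdef, hDdef, hSpdef, hSmdef]; ring
    rw [key, htdef, div_mul_cancel₀ _ hD.ne']
end
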